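/- Davie's lemma on small divisors: let α be irrational with convergents p_j/q_j, let k, n be positive integers, and suppose ‖nα‖ ≤ 1/(4 q_k), where ‖·‖ denotes distance to the nearest integer. Then n ≥ q_k, and either q_k divides n or n ≥ q_{k+1}/4. -/

import Mathlib

/-- Gauss map iterates of `x`: `y₀ = {x}`, `y_{n+1} = {1/y_n}`. -/
noncomputable def gIter (x : ℝ) : ℕ → ℝ
  | 0 => Int.fract x
  | n + 1 => Int.fract (1 / gIter x n)

/-- Partial quotients of the continued fraction of `x`. -/
noncomputable def cfa (x : ℝ) : ℕ → ℤ
  | 0 => ⌊x⌋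
  | n + 1 => ⌊1 / gIter x n⌋

/-- Numerators of the convergents of `x`. -/
noncomputable def cfp (x : ℝ) : ℕ → ℤ
  | 0 => cfa x 0
  | 1 => cfa x 1 * cfa x 0 + 1
  | n + 2 => cfa x (n + 2) * cfp x (n + 1) + cfp x n

/-- Denominators of the convergents of `x`. -/
noncomputable def cfq (x : ℝ) : ℕ → ℤ
  | 0 => 1
  | 1 => cfa x 1
  | n + 2 => cfa x (n + 2) * cfq x (n + 1) + cfq x n

lemma gIter_props (α : ℝ) (hα : Irrational α) :
    ∀ j, Irrational (gIter α j) ∧ 0 < gIter α j ∧ gIter α j < 1 := by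
  intro j
  induction j with
  | zero =>
    have h1 : Irrational (gIter α 0) := by
      show Irrational (Int.fract α)
      rw [Int.fract]; exact hα.sub_intCast _
    exact ⟨h1, lt_of_le_of_ne (Int.fract_nonneg α) (Ne.symm h1.ne_zero),
      Int.fract_lt_one α⟩
  | succ n ih =>
    have h1 : Irrational (1 / gIter α n) := by rw [one_div]; exact ih.1.inv
    have h2 : Irrational (gIter α (n + 1)) := by
      show Irrational (Int.fract (1 / gIter α n))
      rw [Int.fract]; exact h1.sub_intCast _
    exact ⟨h2, lt_of_le_of_ne (Int.fract_nonneg _) (Ne.symm h2.ne_zero),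
      Int.fract_lt_one _⟩

lemma cfa_one_le (α : ℝ) (hα : Irrational α) (j : ℕ) : 1 ≤ cfa α (j + 1) := by
  obtain ⟨_, h0, h1⟩ := gIter_props α hα j
  show (1 : ℤ) ≤ ⌊1 / gIter α j⌋
  rw [Int.le_floor]
  push_cast
  rw [le_div_iff₀ h0]
  linarith

/-- `1/y_j = a_{j+1} + y_{j+1}` -/
lemma inv_gIter (α : ℝ) (j : ℕ) :
    1 / gIter α j = (cfa α (j + 1) : ℝ) + gIter α (j + 1) := by
  show _ = (⌊1 / gIter α j⌋ : ℝ) + Int.fract (1 / gIter α j)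
  rw [Int.floor_add_fract]

lemma cfq_one_le (α : ℝ) (hα : Irrational α) : ∀ j, 1 ≤ cfq α j
  | 0 => by simp [cfq]
  | 1 => by simpa [cfq] using cfa_one_le α hα 0
  | n + 2 => by
    have h1 := cfq_one_le α hα (n + 1)
    have h2 := cfq_one_le α hα n
    have h3 := cfa_one_le α hα (n + 1)
    show 1 ≤ cfa α (n + 2) * cfq α (n + 1) + cfq α n
    nlinarith

lemma cfq_mono (α : ℝ) (hα : Irrational α) : ∀ j, cfq α j ≤ cfq α (j + 1)
  | 0 => by simpa [cfq] using cfa_one_le α hα 0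
  | n + 1 => by
    have h1 := cfq_one_le α hα (n + 1)
    have h2 := cfq_one_le α hα n
    have h3 := cfa_one_le α hα (n + 1)
    show cfq α (n + 1) ≤ cfa α (n + 2) * cfq α (n + 1) + cfq α n
    nlinarith

noncomputable def prodY (α : ℝ) (j : ℕ) : ℝ := ∏ i ∈ Finset.range (j + 1), gIter α i

lemma prodY_zero (α : ℝ) : prodY α 0 = gIter α 0 := by simp [prodY]

lemma prodY_succ (α : ℝ) (j : ℕ) : prodY α (j + 1) = prodY α j * gIter α (j + 1) :=
  Finset.prod_range_succ _ _

lemma prodY_pos (α : ℝ) (hα : Irrational α) (j : ℕ) : 0 < prodY α j :=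
  Finset.prod_pos fun i _ => (gIter_props α hα i).2.1

lemma prodY_lt_one (α : ℝ) (hα : Irrational α) : ∀ j, prodY α j < 1
  | 0 => by rw [prodY_zero]; exact (gIter_props α hα 0).2.2
  | n + 1 => by
    rw [prodY_succ]
    have h1 := prodY_lt_one α hα n
    have h2 := prodY_pos α hα n
    have h3 := (gIter_props α hα (n + 1)).2.1
    have h4 := (gIter_props α hα (n + 1)).2.2
    nlinarith

lemma prodY_succ_lt (α : ℝ) (hα : Irrational α) (j : ℕ) :
    prodY α (j + 1) < prodY α j := by
  rw [prodY_succ]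
  have h2 := prodY_pos α hα j
  have h3 := (gIter_props α hα (j + 1)).2.1
  have h4 := (gIter_props α hα (j + 1)).2.2
  nlinarith

/-- `P_{j+2} = P_j - a_{j+2} P_{j+1}` -/
lemma prodY_rec (α : ℝ) (hα : Irrational α) (j : ℕ) :
    prodY α (j + 2) = prodY α j - (cfa α (j + 2) : ℝ) * prodY α (j + 1) := by
  have hy := (gIter_props α hα (j + 1)).2.1
  have key := inv_gIter α (j + 1)
  rw [div_eq_iff hy.ne'] at key
  rw [prodY_succ, prodY_succ]
  nlinarith [prodY_pos α hα j]

/-- `q_j α - p_j = (-1)^j P_j` -/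
lemma qp_eq (α : ℝ) (hα : Irrational α) :
    ∀ j, (cfq α j : ℝ) * α - (cfp α j : ℝ) = (-1) ^ j * prodY α j
  | 0 => by
    show (((1 : ℤ) : ℝ)) * α - ((⌊α⌋ : ℤ) : ℝ) = (-1) ^ 0 * prodY α 0
    rw [prodY_zero]
    show _ = _ * Int.fract α
    rw [Int.fract]
    push_cast
    ring
  | 1 => by
    have hy := (gIter_props α hα 0).2.1
    have key := inv_gIter α 0
    rw [div_eq_iff hy.ne'] at key
    have h0 : gIter α 0 = α - (⌊α⌋ : ℝ) := rfl
    show ((cfa α 1 : ℤ) : ℝ) * α - ((cfa α 1 * cfa α 0 + 1 : ℤ) : ℝ) = _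
    rw [prodY_succ, prodY_zero]
    have ha0 : ((cfa α 0 : ℤ) : ℝ) = (⌊α⌋ : ℝ) := by rfl
    push_cast
    rw [ha0]
    linear_combination -key - (cfa α 1 : ℝ) * h0
  | n + 2 => by
    have e1 := qp_eq α hα (n + 1)
    have e2 := qp_eq α hα n
    have hPrel := prodY_rec α hα n
    show ((cfa α (n + 2) * cfq α (n + 1) + cfq α n : ℤ) : ℝ) * α
        - ((cfa α (n + 2) * cfp α (n + 1) + cfp α n : ℤ) : ℝ) = _
    push_cast
    have hsgn : ((-1 : ℝ)) ^ (n + 2) = (-1) ^ n := by ring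
    rw [hsgn, hPrel]
    linear_combination ((cfa α (n + 2) : ℝ)) * e1 + e2

/-- `q_{j+1} P_j + q_j P_{j+1} = 1` -/
lemma qP_identity (α : ℝ) (hα : Irrational α) :
    ∀ j, (cfq α (j + 1) : ℝ) * prodY α j + (cfq α j : ℝ) * prodY α (j + 1) = 1
  | 0 => by
    have hy := (gIter_props α hα 0).2.1
    have key := inv_gIter α 0
    rw [div_eq_iff hy.ne'] at key
    show ((cfa α 1 : ℤ) : ℝ) * prodY α 0 + ((1 : ℤ) : ℝ) * prodY α 1 = 1
    rw [prodY_succ, prodY_zero]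
    push_cast
    nlinarith [key]
  | n + 1 => by
    have ih := qP_identity α hα n
    have hPrel := prodY_rec α hα n
    show ((cfa α (n + 2) * cfq α (n + 1) + cfq α n : ℤ) : ℝ) * prodY α (n + 1)
        + (cfq α (n + 1) : ℝ) * prodY α (n + 2) = 1
    rw [hPrel]
    push_cast
    linear_combination ih

/-- determinant: `p_{j+1} q_j - p_j q_{j+1} = (-1)^j` -/
lemma pq_det (α : ℝ) : ∀ j, cfp α (j + 1) * cfq α j - cfp α j * cfq α (j + 1) = (-1) ^ j
  | 0 => by
    show (cfa α 1 * cfa α 0 + 1) * 1 - cfa α 0 * cfa α 1 = _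
    ring
  | n + 1 => by
    have ih := pq_det α n
    show (cfa α (n + 2) * cfp α (n + 1) + cfp α n) * cfq α (n + 1)
        - cfp α (n + 1) * (cfa α (n + 2) * cfq α (n + 1) + cfq α n) = (-1) ^ (n + 1)
    have hsgn : ((-1 : ℤ)) ^ (n + 1) = -(-1) ^ n := by ring
    rw [hsgn]
    linear_combination -ih

/-- Best approximation: if `0 < r < q_{j+1}` then `|rα - s| ≥ P_j`. -/
lemma best_approx (α : ℝ) (hα : Irrational α) (j : ℕ) (r s : ℤ)
    (hr0 : 0 < r) (hr1 : r < cfq α (j + 1)) :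
    prodY α j ≤ |(r : ℝ) * α - (s : ℝ)| := by
  have hdet := pq_det α j
  have hsq : ((-1 : ℤ) ^ j) * ((-1 : ℤ) ^ j) = 1 := by
    rw [← pow_add]; exact Even.neg_one_pow ⟨j, rfl⟩
  set x : ℤ := (-1) ^ j * (r * cfp α (j + 1) - s * cfq α (j + 1)) with hx
  set y : ℤ := (-1) ^ j * (s * cfq α j - r * cfp α j) with hy
  have hr : x * cfq α j + y * cfq α (j + 1) = r := by
    rw [hx, hy]
    linear_combination ((-1 : ℤ) ^ j * r) * hdet + r * hsq
  have hs : x * cfp α j + y * cfp α (j + 1) = s := by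
    rw [hx, hy]
    linear_combination ((-1 : ℤ) ^ j * s) * hdet + s * hsq
  have hrR : (x : ℝ) * (cfq α j : ℝ) + (y : ℝ) * (cfq α (j + 1) : ℝ) = r := by
    exact_mod_cast congrArg (Int.cast : ℤ → ℝ) hr
  have hsR : (x : ℝ) * (cfp α j : ℝ) + (y : ℝ) * (cfp α (j + 1) : ℝ) = s := by
    exact_mod_cast congrArg (Int.cast : ℤ → ℝ) hs
  have e1 := qp_eq α hα j
  have e2 := qp_eq α hα (j + 1)
  have hform : (r : ℝ) * α - (s : ℝ)
      = (-1) ^ j * ((x : ℝ) * prodY α j - (y : ℝ) * prodY α (j + 1)) := by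
    have : (r : ℝ) * α - (s : ℝ)
        = (x : ℝ) * ((cfq α j : ℝ) * α - cfp α j)
          + (y : ℝ) * ((cfq α (j + 1) : ℝ) * α - cfp α (j + 1)) := by
      linear_combination hsR - α * hrR
    rw [this, e1, e2]
    ring
  have habs : |(r : ℝ) * α - (s : ℝ)| = |(x : ℝ) * prodY α j - (y : ℝ) * prodY α (j + 1)| := by
    rw [hform, abs_mul, abs_pow, abs_neg, abs_one, one_pow, one_mul]
  rw [habs]
  have hPj := prodY_pos α hα j
  have hPj1 := prodY_pos α hα (j + 1)
  have hq0 := cfq_one_le α hα j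
  have hq1 := cfq_one_le α hα (j + 1)
  -- sign analysis on x, y
  rcases eq_or_ne y 0 with hy0 | hy0
  · -- r = x q_j, so x ≥ 1
    have hx1 : 1 ≤ x := by
      by_contra hc
      push_neg at hc
      have : x ≤ 0 := by omega
      nlinarith [hr, hy0]
    have hx1R : (1 : ℝ) ≤ (x : ℝ) := by exact_mod_cast hx1
    rw [hy0]
    push_cast
    rw [zero_mul, sub_zero, abs_of_pos (by nlinarith)]
    nlinarith
  · rcases eq_or_ne x 0 with hx0 | hx0
    · exfalso
      rcases lt_trichotomy y 0 with hyc | hyc | hyc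
      · nlinarith [hr]
      · exact hy0 hyc
      · have : 1 ≤ y := hyc
        nlinarith [hr]
    · -- x and y are nonzero with opposite signs
      have hmix : (1 ≤ x ∧ y ≤ -1) ∨ (x ≤ -1 ∧ 1 ≤ y) := by
        rcases lt_trichotomy x 0 with hxc | hxc | hxc
        · rcases lt_trichotomy y 0 with hyc | hyc | hyc
          · exfalso; nlinarith [hr]
          · exact absurd hyc hy0
          · exact Or.inr ⟨by omega, by omega⟩
        · exact absurd hxc hx0
        · rcases lt_trichotomy y 0 with hyc | hyc | hyc
          · exact Or.inl ⟨by omega, by omega⟩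
          · exact absurd hyc hy0
          · exfalso
            have h1x : (1:ℤ) ≤ x := hxc
            have h1y : (1:ℤ) ≤ y := hyc
            nlinarith [hr]
      rcases hmix with ⟨h1, h2⟩ | ⟨h1, h2⟩
      · have h1R : (1 : ℝ) ≤ (x : ℝ) := by exact_mod_cast h1
        have h2R : (y : ℝ) ≤ -1 := by exact_mod_cast h2
        rw [le_abs]
        left; nlinarith
      · have h1R : (x : ℝ) ≤ -1 := by exact_mod_cast h1
        have h2R : (1 : ℝ) ≤ (y : ℝ) := by exact_mod_cast h2
        rw [le_abs]
        right; nlinarith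

/-- Davie's lemma: if `‖nα‖ ≤ 1/(4 q_k)` (distance to the nearest integer), then
`n ≥ q_k`, and either `q_k` divides `n` or `n ≥ q_{k+1}/4`. -/
theorem stmt17 (α : ℝ) (hα : Irrational α) (k n : ℕ) (hn : 0 < n)
    (h : |(n : ℝ) * α - (round ((n : ℝ) * α) : ℤ)| ≤ 1 / (4 * (cfq α k : ℝ))) :
    cfq α k ≤ (n : ℤ) ∧ (cfq α k ∣ (n : ℤ) ∨ (cfq α (k + 1) : ℝ) / 4 ≤ (n : ℝ)) := by
  have hq1le := cfq_one_le α hα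
  -- `1 < 2 q_{j+1} P_j`
  have hlow : ∀ j, 1 < 2 * (cfq α (j + 1) : ℝ) * prodY α j := by
    intro j
    have hid := qP_identity α hα j
    have h1 := prodY_succ_lt α hα j
    have h2 := prodY_pos α hα (j + 1)
    have hmqR : (cfq α j : ℝ) ≤ (cfq α (j + 1) : ℝ) := by exact_mod_cast cfq_mono α hα j
    have hq0R : (1 : ℝ) ≤ (cfq α j : ℝ) := by exact_mod_cast hq1le j
    nlinarith
  -- `q_{j+1} P_j < 1`
  have hup : ∀ j, (cfq α (j + 1) : ℝ) * prodY α j < 1 := by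
    intro j
    have hid := qP_identity α hα j
    have h2 := prodY_pos α hα (j + 1)
    have hq0R : (1 : ℝ) ≤ (cfq α j : ℝ) := by exact_mod_cast hq1le j
    nlinarith
  set ε := |(n : ℝ) * α - (round ((n : ℝ) * α) : ℤ)| with hεdef
  have hεnn : 0 ≤ ε := abs_nonneg _
  have part1 : cfq α k ≤ (n : ℤ) := by
    cases k with
    | zero =>
      show (1 : ℤ) ≤ (n : ℤ)
      omega
    | succ j =>
      by_contra hc
      push_neg at hc
      have hb := best_approx α hα j (n : ℤ) (round ((n : ℝ) * α))
        (by exact_mod_cast hn) hc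
      have hl := hlow j
      have hqR : (1 : ℝ) ≤ (cfq α (j + 1) : ℝ) := by exact_mod_cast hq1le (j + 1)
      have hbε : prodY α j ≤ ε := by
        refine hb.trans ?_
        rw [hεdef]
        push_cast
        exact le_rfl
        
      have h4 : ε * (4 * (cfq α (j + 1) : ℝ)) ≤ 1 :=
        (le_div_iff₀ (by linarith)).mp h
      nlinarith [mul_le_mul_of_nonneg_left hbε
        (by linarith : (0 : ℝ) ≤ 2 * (cfq α (j + 1) : ℝ))]
  refine ⟨part1, ?_⟩
  by_cases hdvd : cfq α k ∣ (n : ℤ)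
  · exact Or.inl hdvd
  right
  by_contra hc
  push_neg at hc
  cases k with
  | zero => exact hdvd (one_dvd _)
  | succ j =>
    have hqZ : (1 : ℤ) ≤ cfq α (j + 1) := hq1le (j + 1)
    set m : ℤ := (n : ℤ) / cfq α (j + 1) with hm
    set r : ℤ := (n : ℤ) % cfq α (j + 1) with hr
    have hnm : cfq α (j + 1) * m + r = (n : ℤ) := Int.mul_ediv_add_emod _ _
    have hr0 : 0 ≤ r := Int.emod_nonneg _ (by omega)
    have hrq : r < cfq α (j + 1) := Int.emod_lt_of_pos _ (by omega)
    have hrne : r ≠ 0 := by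
      intro h0
      exact hdvd ⟨m, by omega⟩
    have hm0 : 0 ≤ m := Int.ediv_nonneg (by positivity) (by omega)
    have hm0R : (0 : ℝ) ≤ (m : ℝ) := by exact_mod_cast hm0
    have hnmR : (cfq α (j + 1) : ℝ) * (m : ℝ) + (r : ℝ) = (n : ℝ) := by
      exact_mod_cast congrArg (Int.cast : ℤ → ℝ) hnm
    have hmq_le : (m : ℝ) * (cfq α (j + 1) : ℝ) ≤ (n : ℝ) := by
      have : (r : ℝ) ≥ 0 := by exact_mod_cast hr0
      linarith
    have hPk1 := prodY_pos α hα (j + 1)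
    have habsD : |(cfq α (j + 1) : ℝ) * α - (cfp α (j + 1) : ℝ)| = prodY α (j + 1) := by
      rw [qp_eq α hα (j + 1), abs_mul, abs_pow, abs_neg, abs_one, one_pow, one_mul,
        abs_of_pos hPk1]
    have heq : (r : ℝ) * α - ((round ((n : ℝ) * α) - m * cfp α (j + 1) : ℤ) : ℝ)
        = ((n : ℝ) * α - (round ((n : ℝ) * α) : ℤ))
          - (m : ℝ) * ((cfq α (j + 1) : ℝ) * α - (cfp α (j + 1) : ℝ)) := by
      push_cast
      linear_combination α * hnmR
    have key : |(r : ℝ) * α - ((round ((n : ℝ) * α) - m * cfp α (j + 1) : ℤ) : ℝ)|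
        ≤ ε + (m : ℝ) * prodY α (j + 1) := by
      rw [heq, sub_eq_add_neg]
      refine (abs_add_le _ _).trans ?_
      rw [abs_neg, abs_mul, habsD, abs_of_nonneg hm0R, hεdef]
    have hb := best_approx α hα j r (round ((n : ℝ) * α) - m * cfp α (j + 1))
      (lt_of_le_of_ne hr0 (Ne.symm hrne)) hrq
    have s2 : prodY α j ≤ ε + (m : ℝ) * prodY α (j + 1) := hb.trans key
    have hl := hlow j
    have hu := hup (j + 1)
    have hqR : (1 : ℝ) ≤ (cfq α (j + 1) : ℝ) := by exact_mod_cast hqZ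
    have s1 : ε * (4 * (cfq α (j + 1) : ℝ)) ≤ 1 := (le_div_iff₀ (by linarith)).mp h
    have s4 : 1 / 2 < 2 * (cfq α (j + 1) : ℝ) * ((m : ℝ) * prodY α (j + 1)) := by
      nlinarith [mul_le_mul_of_nonneg_left s2
        (by linarith : (0 : ℝ) ≤ 2 * (cfq α (j + 1) : ℝ))]
    have s5 : 4 * ((m : ℝ) * (cfq α (j + 1) : ℝ)) < (cfq α (j + 2) : ℝ) := by
      linarith
    have s6 : 4 * ((m : ℝ) * (cfq α (j + 1) : ℝ)) * prodY α (j + 1)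
        < (cfq α (j + 2) : ℝ) * prodY α (j + 1) :=
      mul_lt_mul_of_pos_right s5 hPk1
    linarith
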